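/- Let (I, ≤) be a directed preorder and (X_i, f_{ji}) a regular directed system of topological spaces over (I, ≤). If every X_i is a T₁ (Fréchet) space, then the direct limit X_∞ is a T₁ space. -/

import Mathlib

universe u v

/-- A directed system of topological spaces over a preorder `I`:
spaces `X i` with continuous transition maps `map i j : X i → X j` for `i ≤ j`,
satisfying the identity and composition laws. -/
structure TopDirectedSystem (I : Type u) [Preorder I] : Type (max u (v + 1)) where
  X : I → Type v
  top : ∀ i, TopologicalSpace (X i)
  map : ∀ i j, i ≤ j → X i → X j
  map_continuous : ∀ i j (h : i ≤ j), Continuous (map i j h)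
  map_id : ∀ i (x : X i), map i i le_rfl x = x
  map_comp : ∀ i j k (hij : i ≤ j) (hjk : j ≤ k) (x : X i),
    map j k hjk (map i j hij x) = map i k (hij.trans hjk) x

attribute [instance] TopDirectedSystem.top

namespace TopDirectedSystem

variable {I : Type u} [Preorder I] (S : TopDirectedSystem.{u, v} I)

/-- The relation on the disjoint union: `⟨i, x⟩ ∼ ⟨j, y⟩` iff there is `k ≥ i, j`
with `f_{ki} x = f_{kj} y`. -/
def Rel (p q : Σ i, S.X i) : Prop :=
  ∃ (k : I) (hik : p.1 ≤ k) (hjk : q.1 ≤ k), S.map p.1 k hik p.2 = S.map q.1 k hjk q.2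

/-- The direct limit: the quotient of the disjoint union (with the disjoint union
topology) by `Rel`, carrying the quotient topology. -/
def Limit : Type (max u v) := Quot S.Rel

instance : TopologicalSpace S.Limit :=
  inferInstanceAs (TopologicalSpace (Quot S.Rel))

/-- The canonical map `f_{*i} : X i → X_∞`. -/
def ι (i : I) (x : S.X i) : S.Limit :=
  Quot.mk S.Rel ⟨i, x⟩

/-- A directed system is regular if all transition maps are injective
(continuous) open maps. -/
def Regular : Prop :=
  ∀ i j (h : i ≤ j), Function.Injective (S.map i j h) ∧ IsOpenMap (S.map i j h)

end TopDirectedSystem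

/-- the direct limit of a regular directed system of T1Space
topological spaces is a T1Space. -/
lemma rel_equiv {I : Type u} [Preorder I] [IsDirected I (· ≤ ·)]
    (S : TopDirectedSystem.{u, v} I) : Equivalence S.Rel := by
  constructor
  · intro p; exact ⟨p.1, le_rfl, le_rfl, rfl⟩
  · rintro p q ⟨k, h1, h2, he⟩; exact ⟨k, h2, h1, he.symm⟩
  · rintro p q r ⟨k1, h1, h2, he1⟩ ⟨k2, h3, h4, he2⟩
    obtain ⟨m, hm1, hm2⟩ := directed_of (· ≤ ·) k1 k2
    refine ⟨m, h1.trans hm1, h4.trans hm2, ?_⟩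
    have e1 := congrArg (S.map k1 m hm1) he1
    have e2 := congrArg (S.map k2 m hm2) he2
    rw [S.map_comp, S.map_comp] at e1
    rw [S.map_comp, S.map_comp] at e2
    calc S.map p.1 m _ p.2 = S.map q.1 m (h2.trans hm1) q.2 := e1
      _ = S.map q.1 m (h3.trans hm2) q.2 := rfl
      _ = S.map r.1 m _ r.2 := e2

lemma mk_eq_iff {I : Type u} [Preorder I] [IsDirected I (· ≤ ·)]
    (S : TopDirectedSystem.{u, v} I) (p q : Σ i, S.X i) :
    Quot.mk S.Rel p = Quot.mk S.Rel q ↔ S.Rel p q :=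
  Quot.eq.trans (rel_equiv S).eqvGen_iff

theorem limit_t1 {I : Type u} [Preorder I] [Nonempty I] [IsDirected I (· ≤ ·)]
    (S : TopDirectedSystem.{u, v} I) (hreg : S.Regular) (h : ∀ i, T1Space (S.X i)) :
    T1Space S.Limit := by
  constructor
  intro p
  induction p using Quot.ind with
  | _ a =>
  obtain ⟨i₀, x₀⟩ := a
  rw [← isOpen_compl_iff]
  have : IsOpen ((Quot.mk S.Rel) ⁻¹' ({Quot.mk S.Rel ⟨i₀, x₀⟩}ᶜ :
      Set S.Limit)) → IsOpen ({Quot.mk S.Rel ⟨i₀, x₀⟩}ᶜ : Set S.Limit) :=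
    fun hh => (isQuotientMap_quot_mk.isOpen_preimage).mp hh
  apply this
  rw [isOpen_sigma_iff]
  intro j
  rw [isOpen_iff_forall_mem_open]
  intro y hy
  -- hy : ⟨j, y⟩ ∈ Sigma.mk j ⁻¹' (Quot.mk ⁻¹' {..}ᶜ), i.e. Quot.mk ⟨j,y⟩ ≠ Quot.mk ⟨i₀,x₀⟩
  have hne : ¬ S.Rel ⟨j, y⟩ ⟨i₀, x₀⟩ := by
    intro hr
    exact hy ((mk_eq_iff S _ _).mpr hr)
  obtain ⟨k, hjk, hik⟩ := directed_of (· ≤ ·) j i₀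
  have hzc : S.map j k hjk y ≠ S.map i₀ k hik x₀ := by
    intro he; exact hne ⟨k, hjk, hik, he⟩
  have := h k
  set U : Set (S.X k) := {S.map i₀ k hik x₀}ᶜ with hU
  have hUo : IsOpen U := isOpen_compl_singleton
  have hzU : S.map j k hjk y ∈ U := hzc
  have hcU : S.map i₀ k hik x₀ ∉ U := fun hh => hh rfl
  refine ⟨S.map j k hjk ⁻¹' U, ?_, (S.map_continuous j k hjk).isOpen_preimage U hUo, hzU⟩
  intro y' hy'
  simp only [Set.mem_preimage, Set.mem_compl_iff, Set.mem_singleton_iff]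
  intro heq
  obtain ⟨k', h1, h2, he⟩ := (mk_eq_iff S _ _).mp heq
  obtain ⟨m, hm1, hm2⟩ := directed_of (· ≤ ·) k k'
  have e1 := congrArg (S.map k' m hm2) he
  rw [S.map_comp, S.map_comp] at e1
  have e2 : S.map k m hm1 (S.map j k hjk y') = S.map k m hm1 (S.map i₀ k hik x₀) := by
    rw [S.map_comp, S.map_comp]
    exact e1
  have := (hreg k m hm1).1 e2
  exact hcU (this ▸ hy')
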